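/- (Excess Lemma) Let X̃ be a proper metric space, G a group acting on X̃ by isometries, properly discontinuously (so that the infima defining D are attained), and D(x,y) = inf_{g ∈ G} dist x (g • y). Let α̃ : [0,∞) → X̃ be a ray such that Δ := lim_{t→∞} (t − D(α̃ 0, α̃ t)) is finite. Then Δ = sup_{g ∈ G} B_{α̃}(α̃ 0, g • α̃ 0), where B_{α̃}(x,y) = lim_{t→∞} (dist x (α̃ t) − dist (α̃ t) y) is the Busemann function of the ray α̃ (which exists). -/

import Mathlib

open Filter

/-- The infimum defining the quotient pseudo-distance is attained. -/
lemma inf_attained {X : Type*} [MetricSpace X] [ProperSpace X] {G : Type*} [Group G]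
    [MulAction G X] [ProperlyDiscontinuousSMul G X] (x y : X) :
    ∃ g : G, dist x (g • y) = ⨅ g : G, dist x (g • y) := by
  have hbdd : BddBelow (Set.range fun g : G => dist x (g • y)) :=
    ⟨0, by rintro _ ⟨g, rfl⟩; exact dist_nonneg⟩
  set m := ⨅ g : G, dist x (g • y) with hm
  have hfin : Set.Finite {g : G | ((g • ·) '' {y}) ∩ Metric.closedBall x (m + 1) ≠ ∅} :=
    by simpa only [Set.nonempty_iff_ne_empty] using
      ProperlyDiscontinuousSMul.finite_disjoint_inter_image (Γ := G) (isCompact_singleton : IsCompact {y})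
        (isCompact_closedBall x (m + 1))
  set T : Set G := {g : G | dist x (g • y) ≤ m + 1} with hT
  have hTfin : T.Finite := by
    refine hfin.subset fun g hg => ?_
    have : g • y ∈ ((g • ·) '' {y}) ∩ Metric.closedBall x (m + 1) := by
      refine ⟨⟨y, rfl, rfl⟩, ?_⟩
      simpa [hT, Metric.mem_closedBall, dist_comm] using hg
    exact Set.nonempty_iff_ne_empty.mp ⟨_, this⟩
  have hTne : T.Nonempty := by
    obtain ⟨g, hg⟩ := exists_lt_of_ciInf_lt (show m < m + 1 by linarith)
    exact ⟨g, le_of_lt hg⟩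
  obtain ⟨g0, hg0T, hg0min⟩ := Set.exists_min_image T (fun g => dist x (g • y)) hTfin hTne
  refine ⟨g0, le_antisymm ?_ (ciInf_le hbdd g0)⟩
  refine le_ciInf fun g => ?_
  by_cases hg : g ∈ T
  · exact hg0min g hg
  · have : m + 1 < dist x (g • y) := lt_of_not_ge hg
    exact le_trans hg0T this.le

/-- **Excess Lemma.** Let `G` act by isometries, properly discontinuously,
on a proper metric space `X̃`, with quotient pseudo-distance
`D x y = inf_{g ∈ G} dist x (g • y)`. If `α̃` is a ray of `X̃` such that the excess
`Δ = lim_{t→∞} (t − D(α̃ 0, α̃ t))` of its projection is finite, then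
`Δ = sup_{g ∈ G} B_{α̃}(α̃ 0, g • α̃ 0)`, where `B_{α̃}` is the Busemann function of `α̃`. -/
theorem excess_lemma {X : Type*} [MetricSpace X] [ProperSpace X] {G : Type*} [Group G]
    [MulAction G X] (hiso : ∀ g : G, Isometry (fun x : X => g • x))
    [ProperlyDiscontinuousSMul G X]
    (α : ℝ → X)
    (hray : ∀ s t : ℝ, 0 ≤ s → 0 ≤ t → dist (α s) (α t) = |s - t|)
    (Δ : ℝ)
    (hΔ : Tendsto (fun t : ℝ => t - ⨅ g : G, dist (α 0) (g • α t)) atTop (nhds Δ))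
    (B : X → X → ℝ)
    (hB : ∀ x y : X, Tendsto (fun t : ℝ => dist x (α t) - dist (α t) y)
      atTop (nhds (B x y))) :
    IsLUB (Set.range fun g : G => B (α 0) (g • α 0)) Δ := by
  have hdist0 : ∀ t : ℝ, 0 ≤ t → dist (α 0) (α t) = t := by
    intro t ht
    rw [hray 0 t le_rfl ht, abs_of_nonpos (by linarith)]; ring
  -- monotonicity: t - dist (α t) y ≤ B (α 0) y for t ≥ 0
  have hBge : ∀ (y : X) (t : ℝ), 0 ≤ t → t - dist (α t) y ≤ B (α 0) y := by
    intro y t ht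
    refine ge_of_tendsto (hB (α 0) y) ?_
    filter_upwards [eventually_ge_atTop t, eventually_ge_atTop (0 : ℝ)] with s hst hs
    have h1 : dist (α 0) (α s) = s := hdist0 s hs
    have h2 : dist (α s) y ≤ dist (α s) (α t) + dist (α t) y := dist_triangle _ _ _
    have h3 : dist (α s) (α t) = s - t := by
      rw [hray s t hs ht, abs_of_nonneg (by linarith)]
    linarith
  have hbdd : ∀ t : ℝ, BddBelow (Set.range fun g : G => dist (α 0) (g • α t)) :=
    fun t => ⟨0, by rintro _ ⟨g, rfl⟩; exact dist_nonneg⟩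
  have hsmul : ∀ (g : G) (a b : X), dist (g • a) (g • b) = dist a b :=
    fun g a b => (hiso g).dist_eq a b
  constructor
  · -- every B (α 0) (g • α 0) ≤ Δ
    rintro _ ⟨g, rfl⟩
    refine le_of_tendsto_of_tendsto (hB (α 0) (g • α 0)) hΔ ?_
    filter_upwards [eventually_ge_atTop (0 : ℝ)] with t ht
    have h1 : dist (α 0) (α t) = t := hdist0 t ht
    have h2 : (⨅ h : G, dist (α 0) (h • α t)) ≤ dist (α t) (g • α 0) := by
      have : dist (α 0) (g⁻¹ • α t) = dist (α t) (g • α 0) := by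
        rw [dist_comm (α t), ← hsmul g⁻¹ (g • α 0) (α t), inv_smul_smul]
      calc (⨅ h : G, dist (α 0) (h • α t)) ≤ dist (α 0) (g⁻¹ • α t) := ciInf_le (hbdd t) g⁻¹
        _ = _ := this
    linarith
  · -- any upper bound b satisfies Δ ≤ b
    intro b hb
    refine le_of_tendsto hΔ ?_
    filter_upwards [eventually_ge_atTop (0 : ℝ)] with t ht
    obtain ⟨g, hg⟩ := inf_attained (α 0) (α t) (G := G)
    have h1 : dist (α 0) (g • α t) = dist (α t) (g⁻¹ • α 0) := by
      rw [dist_comm (α t), ← hsmul g⁻¹ (α 0) (g • α t), inv_smul_smul, dist_comm]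
    have h2 : t - dist (α t) (g⁻¹ • α 0) ≤ B (α 0) (g⁻¹ • α 0) := hBge _ t ht
    have h3 : B (α 0) (g⁻¹ • α 0) ≤ b := hb ⟨g⁻¹, rfl⟩
    have := hg
    linarith [hg ▸ (h1 ▸ h2)]
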